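/- Let V be a hypergraph on vertex set {1,…,p} (a finite set of nonempty subsets of {1,…,p}). Define a 'move' that replaces a hyperedge of cardinality ≥ 3 using the symmetric-difference operation corresponding to adding the multiset of all nonempty subsets of a 3-element set {a,b,c} (i.e., taking the symmetric difference of the hypergraph with {{a},{b},{c},{a,b},{a,c},{b,c},{a,b,c}}). Then: for any hypergraph Γ containing a set of cardinality ≥ 3, there is a finite sequence of such moves and basis changes (GL(p, F₂) substitutions on the characters) producing a hypergraph all of whose edges have cardinality ≤ 2. -/

import Mathlib

open Finset

/-- The indicator vector in `F₂^p` of a subset of `Fin p`. -/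
def toVec {p : ℕ} (S : Finset (Fin p)) : Fin p → ZMod 2 :=
  fun i => if i ∈ S then 1 else 0

/-- The subset of `Fin p` corresponding to a vector in `F₂^p`. -/
def fromVec {p : ℕ} (v : Fin p → ZMod 2) : Finset (Fin p) :=
  Finset.univ.filter (fun i => v i = 1)

/-- The seven nonempty subsets of `{a, b, c}`. -/
def sevenSets {p : ℕ} (a b c : Fin p) : Finset (Finset (Fin p)) :=
  ({a, b, c} : Finset (Fin p)).powerset.filter (· ≠ ∅)

/-- One step of the algorithm: either take the symmetric difference with the
seven nonempty subsets of some 3-element set `{a,b,c}` (adding the spin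
representation and removing complex summands), or apply a basis change,
i.e. an invertible `F₂`-linear substitution on the characters. -/
def Step {p : ℕ} (Γ Γ' : Finset (Finset (Fin p))) : Prop :=
  (∃ a b c : Fin p, a ≠ b ∧ a ≠ c ∧ b ≠ c ∧ Γ' = symmDiff Γ (sevenSets a b c)) ∨
  (∃ g : (Fin p → ZMod 2) ≃ₗ[ZMod 2] (Fin p → ZMod 2),
    Γ' = Γ.image fun S => fromVec (g (toVec S)))

/-! ### Auxiliary lemmas -/

lemma zmod2_cases (a : ZMod 2) : a = 0 ∨ a = 1 := by revert a; decide

lemma fromVec_toVec {p : ℕ} (S : Finset (Fin p)) : fromVec (toVec S) = S := by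
  ext i
  by_cases h : i ∈ S <;> simp [fromVec, toVec, h]

lemma toVec_fromVec {p : ℕ} (x : Fin p → ZMod 2) : toVec (fromVec x) = x := by
  funext i
  rcases zmod2_cases (x i) with h | h <;> simp [toVec, fromVec, h]

set_option linter.unnecessarySeqFocus false in
lemma toVec_symmDiff {p : ℕ} (A B : Finset (Fin p)) :
    toVec (symmDiff A B) = toVec A + toVec B := by
  funext i
  by_cases hA : i ∈ A <;> by_cases hB : i ∈ B <;>
    simp [toVec, Finset.mem_symmDiff, hA, hB] <;> decide

/-- The basis-change action on a hyperedge. -/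
def Fg {p : ℕ} (g : (Fin p → ZMod 2) ≃ₗ[ZMod 2] (Fin p → ZMod 2))
    (S : Finset (Fin p)) : Finset (Fin p) :=
  fromVec (g (toVec S))

lemma Fg_Fg_symm {p : ℕ} (g : (Fin p → ZMod 2) ≃ₗ[ZMod 2] (Fin p → ZMod 2))
    (S : Finset (Fin p)) : Fg g (Fg g.symm S) = S := by
  simp [Fg, toVec_fromVec, fromVec_toVec]

lemma Fg_symm_Fg {p : ℕ} (g : (Fin p → ZMod 2) ≃ₗ[ZMod 2] (Fin p → ZMod 2))
    (S : Finset (Fin p)) : Fg g.symm (Fg g S) = S := by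
  simp [Fg, toVec_fromVec, fromVec_toVec]

lemma Fg_injective {p : ℕ} (g : (Fin p → ZMod 2) ≃ₗ[ZMod 2] (Fin p → ZMod 2)) :
    Function.Injective (Fg g) := fun S T h => by
  have := congrArg (Fg g.symm) h
  rwa [Fg_symm_Fg, Fg_symm_Fg] at this

/-- Composite move: symmetric difference with the image of `sevenSets` under a
basis change can be realized by three steps. -/
lemma reach {p : ℕ} (Γ : Finset (Finset (Fin p)))
    (g : (Fin p → ZMod 2) ≃ₗ[ZMod 2] (Fin p → ZMod 2)) {a b c : Fin p}
    (hab : a ≠ b) (hac : a ≠ c) (hbc : b ≠ c) :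
    Relation.ReflTransGen Step Γ (symmDiff Γ ((sevenSets a b c).image (Fg g))) := by
  have s1 : Step Γ (Γ.image (Fg g.symm)) := Or.inr ⟨g.symm, rfl⟩
  have s2 : Step (Γ.image (Fg g.symm))
      (symmDiff (Γ.image (Fg g.symm)) (sevenSets a b c)) :=
    Or.inl ⟨a, b, c, hab, hac, hbc, rfl⟩
  have s3 : Step (symmDiff (Γ.image (Fg g.symm)) (sevenSets a b c))
      ((symmDiff (Γ.image (Fg g.symm)) (sevenSets a b c)).image (Fg g)) :=
    Or.inr ⟨g, rfl⟩
  have he : (symmDiff (Γ.image (Fg g.symm)) (sevenSets a b c)).image (Fg g)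
      = symmDiff Γ ((sevenSets a b c).image (Fg g)) := by
    rw [Finset.image_symmDiff _ _ (Fg_injective g), Finset.image_image]
    congr 1
    have : (Fg g ∘ Fg g.symm) = id := funext fun S => Fg_Fg_symm g S
    rw [this, Finset.image_id]
  exact Relation.ReflTransGen.head s1 (Relation.ReflTransGen.head s2
    (Relation.ReflTransGen.single (he ▸ s3)))

/-- The transvection-like involutive basis change `x ↦ x + x c • u`, for `u c = 0`. -/
def teq {p : ℕ} (c : Fin p) (u : Fin p → ZMod 2) (hu : u c = 0) :
    (Fin p → ZMod 2) ≃ₗ[ZMod 2] (Fin p → ZMod 2) where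
  toFun x := x + x c • u
  invFun x := x + x c • u
  map_add' x y := by
    simp only [Pi.add_apply, add_smul]
    abel
  map_smul' r x := by
    simp only [Pi.smul_apply, smul_eq_mul, RingHom.id_apply, smul_add, mul_smul]
  left_inv x := by
    have h1 : (x + x c • u) c = x c := by simp [hu]
    show (x + x c • u) + ((x + x c • u) c) • u = x
    rw [h1, add_assoc, ← add_smul, CharTwo.add_self_eq_zero, zero_smul, add_zero]
  right_inv x := by
    have h1 : (x + x c • u) c = x c := by simp [hu]
    show (x + x c • u) + ((x + x c • u) c) • u = x
    rw [h1, add_assoc, ← add_smul, CharTwo.add_self_eq_zero, zero_smul, add_zero]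

lemma teq_apply {p : ℕ} (c : Fin p) (u : Fin p → ZMod 2) (hu : u c = 0)
    (x : Fin p → ZMod 2) : teq c u hu x = x + x c • u := rfl

section vlemmas

variable {p : ℕ} {v : Finset (Fin p)} {a b c : Fin p}

lemma hu_aux (hc : c ∈ v) : toVec (v.erase c) c = 0 := by
  simp [toVec]

lemma Fg_teq_of_not_mem (hc : c ∈ v) {S : Finset (Fin p)} (hcS : c ∉ S) :
    fromVec (teq c (toVec (v.erase c)) (hu_aux hc) (toVec S)) = S := by
  rw [teq_apply]
  have : toVec S c = 0 := by simp [toVec, hcS]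
  rw [this, zero_smul, add_zero, fromVec_toVec]

lemma Fg_teq_of_mem (hc : c ∈ v) {S : Finset (Fin p)} (hcS : c ∈ S) :
    fromVec (teq c (toVec (v.erase c)) (hu_aux hc) (toVec S))
      = symmDiff S (v.erase c) := by
  rw [teq_apply]
  have : toVec S c = 1 := by simp [toVec, hcS]
  rw [this, one_smul, ← toVec_symmDiff, fromVec_toVec]

lemma Fg_teq_singleton (hc : c ∈ v) :
    fromVec (teq c (toVec (v.erase c)) (hu_aux hc) (toVec {c})) = v := by
  rw [Fg_teq_of_mem hc (Finset.mem_singleton_self c)]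
  have hd : Disjoint ({c} : Finset (Fin p)) (v.erase c) := by simp
  rw [hd.symmDiff_eq_sup]
  show {c} ∪ v.erase c = v
  rw [show ({c} : Finset (Fin p)) ∪ v.erase c = insert c (v.erase c) from rfl,
    Finset.insert_erase hc]

lemma card_Fg_teq_lt (hv3 : 3 ≤ v.card) (ha : a ∈ v) (hb : b ∈ v) (hc : c ∈ v)
    {S : Finset (Fin p)}
    (hS : S ∈ sevenSets a b c) (hSne : S ≠ {c}) :
    (fromVec (teq c (toVec (v.erase c)) (hu_aux hc) (toVec S))).card < v.card := by
  rw [sevenSets, Finset.mem_filter, Finset.mem_powerset] at hS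
  obtain ⟨hSsub, hSne'⟩ := hS
  by_cases hcS : c ∈ S
  · rw [Fg_teq_of_mem hc hcS]
    have hx : ∃ x ∈ S, x ≠ c := by
      by_contra h
      push_neg at h
      exact hSne (Finset.eq_singleton_iff_unique_mem.2 ⟨hcS, fun x hx => h x hx⟩)
    obtain ⟨x, hxS, hxc⟩ := hx
    have hxab : x = a ∨ x = b := by
      have := hSsub hxS
      simp only [Finset.mem_insert, Finset.mem_singleton] at this
      tauto
    have hxv : x ∈ v := by rcases hxab with h | h <;> subst h <;> assumption
    have hxe : x ∈ v.erase c := Finset.mem_erase.2 ⟨hxc, hxv⟩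
    have hsub : symmDiff S (v.erase c) ⊆ v.erase x := by
      intro y hy
      rw [Finset.mem_symmDiff] at hy
      refine Finset.mem_erase.2 ⟨?_, ?_⟩
      · rintro rfl
        rcases hy with ⟨h1, h2⟩ | ⟨h1, h2⟩
        · exact h2 hxe
        · exact h2 hxS
      · rcases hy with ⟨h1, h2⟩ | ⟨h1, h2⟩
        · have := hSsub h1
          simp only [Finset.mem_insert, Finset.mem_singleton] at this
          rcases this with rfl | rfl | rfl <;> assumption
        · exact Finset.mem_of_mem_erase h1
    calc (symmDiff S (v.erase c)).card ≤ (v.erase x).card := Finset.card_le_card hsub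
      _ = v.card - 1 := Finset.card_erase_of_mem hxv
      _ < v.card := by omega
  · rw [Fg_teq_of_not_mem hc hcS]
    have hsub : S ⊆ {a, b} := by
      intro y hy
      have := hSsub hy
      simp only [Finset.mem_insert, Finset.mem_singleton] at this ⊢
      rcases this with rfl | rfl | rfl
      · left; rfl
      · right; rfl
      · exact absurd hy hcS
    have : S.card ≤ 2 := le_trans (Finset.card_le_card hsub)
      (le_trans (Finset.card_insert_le _ _) (by simp))
    omega

end vlemmas

lemma exists_three {p : ℕ} {v : Finset (Fin p)} (h : 3 ≤ v.card) :
    ∃ a b c, a ∈ v ∧ b ∈ v ∧ c ∈ v ∧ a ≠ b ∧ a ≠ c ∧ b ≠ c := by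
  obtain ⟨a, ha⟩ := Finset.card_pos.1 (by omega : 0 < v.card)
  have h2 : 0 < (v.erase a).card := by rw [Finset.card_erase_of_mem ha]; omega
  obtain ⟨b, hb⟩ := Finset.card_pos.1 h2
  have h3 : 0 < ((v.erase a).erase b).card := by
    rw [Finset.card_erase_of_mem hb, Finset.card_erase_of_mem ha]; omega
  obtain ⟨c, hc⟩ := Finset.card_pos.1 h3
  obtain ⟨hcb, hc'⟩ := Finset.mem_erase.1 hc
  obtain ⟨hca, hcv⟩ := Finset.mem_erase.1 hc'
  obtain ⟨hba, hbv⟩ := Finset.mem_erase.1 hb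
  exact ⟨a, b, c, ha, hbv, hcv, fun h => hba h.symm, fun h => hca h.symm,
    fun h => hcb h.symm⟩

lemma card_sevenSets_le {p : ℕ} (a b c : Fin p) : (sevenSets a b c).card ≤ 7 := by
  have hsub : sevenSets a b c ⊆ (({a, b, c} : Finset (Fin p)).powerset).erase ∅ := by
    intro T hT
    rw [sevenSets, Finset.mem_filter] at hT
    exact Finset.mem_erase.2 ⟨hT.2, hT.1⟩
  have h1 : ((({a, b, c} : Finset (Fin p)).powerset).erase ∅).card
      = (({a, b, c} : Finset (Fin p)).powerset).card - 1 :=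
    Finset.card_erase_of_mem (Finset.empty_mem_powerset _)
  have h2 : (({a, b, c} : Finset (Fin p)).powerset).card
      = 2 ^ ({a, b, c} : Finset (Fin p)).card :=
    Finset.card_powerset _
  have h3 : ({a, b, c} : Finset (Fin p)).card ≤ 3 :=
    le_trans (Finset.card_insert_le _ _) (by
      have := Finset.card_insert_le b ({c} : Finset (Fin p))
      simp at this ⊢
      omega)
  have h4 : (2 : ℕ) ^ ({a, b, c} : Finset (Fin p)).card ≤ 2 ^ 3 :=
    Nat.pow_le_pow_right (by norm_num) h3
  have := Finset.card_le_card hsub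
  omega

/-- The weight of an edge: `7 ^ card` if the edge is big, else `0`. -/
def wt {p : ℕ} (S : Finset (Fin p)) : ℕ := if 3 ≤ S.card then 7 ^ S.card else 0

/-- Main lemma: by induction on the total weight, every hypergraph can be
reduced to one whose edges all have cardinality at most `2`. -/
lemma key {p : ℕ} : ∀ (n : ℕ) (Γ : Finset (Finset (Fin p))), (∑ S ∈ Γ, wt S) ≤ n →
    ∃ Γ', Relation.ReflTransGen Step Γ Γ' ∧ ∀ S ∈ Γ', S.card ≤ 2 := by
  intro n
  induction n using Nat.strong_induction_on with
  | _ n ih =>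
    intro Γ hn
    by_cases hall : ∀ S ∈ Γ, S.card ≤ 2
    · exact ⟨Γ, Relation.ReflTransGen.refl, hall⟩
    push_neg at hall
    obtain ⟨v, hvΓ, hv2⟩ := hall
    have hv3 : 3 ≤ v.card := by omega
    obtain ⟨a, b, c, ha, hb, hc, hab, hac, hbc⟩ := exists_three hv3
    set g := teq c (toVec (v.erase c)) (hu_aux hc) with hg
    set D := (sevenSets a b c).image (Fg g) with hDdef
    have hreach := reach Γ g hab hac hbc
    have hcmem : ({c} : Finset (Fin p)) ∈ sevenSets a b c := by
      rw [sevenSets, Finset.mem_filter, Finset.mem_powerset]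
      constructor
      · simp
      · simp
    have hvD : v ∈ D := Finset.mem_image.2 ⟨{c}, hcmem, Fg_teq_singleton hc⟩
    have hDlt : ∀ T ∈ D, T ≠ v → T.card < v.card := by
      intro T hT hTv
      obtain ⟨S, hS, rfl⟩ := Finset.mem_image.1 hT
      by_cases hSc : S = {c}
      · subst hSc
        exact absurd (Fg_teq_singleton hc) hTv
      · exact card_Fg_teq_lt hv3 ha hb hc hS hSc
    -- the total weight strictly decreases
    have hΦ : (∑ S ∈ symmDiff Γ D, wt S) < ∑ S ∈ Γ, wt S := by
      have hsplit : symmDiff Γ D = (Γ \ D) ∪ (D \ Γ) := by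
        rw [symmDiff_def]
        rfl
      have hdisj : Disjoint (Γ \ D) (D \ Γ) := disjoint_sdiff_sdiff
      have hsum : (∑ S ∈ symmDiff Γ D, wt S)
          = (∑ S ∈ Γ \ D, wt S) + ∑ S ∈ D \ Γ, wt S := by
        rw [hsplit, Finset.sum_union hdisj]
      have h1 : (∑ S ∈ Γ \ D, wt S) ≤ ∑ S ∈ Γ.erase v, wt S := by
        apply Finset.sum_le_sum_of_subset
        intro x hx
        rw [Finset.mem_sdiff] at hx
        exact Finset.mem_erase.2 ⟨fun h => hx.2 (h ▸ hvD), hx.1⟩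
      have h2 : (∑ S ∈ D \ Γ, wt S) ≤ ∑ S ∈ D.erase v, wt S := by
        apply Finset.sum_le_sum_of_subset
        intro x hx
        rw [Finset.mem_sdiff] at hx
        exact Finset.mem_erase.2 ⟨fun h => hx.2 (h ▸ hvΓ), hx.1⟩
      have h3 : ∀ T ∈ D.erase v, wt T ≤ 7 ^ (v.card - 1) := by
        intro T hT
        obtain ⟨hTv, hTD⟩ := Finset.mem_erase.1 hT
        have hlt := hDlt T hTD hTv
        rw [wt]
        split
        · exact Nat.pow_le_pow_right (by norm_num) (by omega)
        · exact Nat.zero_le _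
      have h4 : (∑ T ∈ D.erase v, wt T) ≤ (D.erase v).card * 7 ^ (v.card - 1) := by
        have := Finset.sum_le_card_nsmul (D.erase v) wt (7 ^ (v.card - 1)) h3
        simpa [smul_eq_mul] using this
      have h5 : (D.erase v).card ≤ 6 := by
        have hD7 : D.card ≤ 7 :=
          le_trans (Finset.card_image_le) (card_sevenSets_le a b c)
        have := Finset.card_erase_of_mem hvD
        omega
      have h6 : (∑ S ∈ Γ, wt S) = wt v + ∑ S ∈ Γ.erase v, wt S :=
        (Finset.add_sum_erase _ _ hvΓ).symm
      have h7 : wt v = 7 ^ (v.card - 1) * 7 := by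
        rw [wt, if_pos hv3, ← pow_succ]
        congr 1
        omega
      have hp : 0 < 7 ^ (v.card - 1) := Nat.pow_pos (by norm_num)
      have h8 : (∑ S ∈ D \ Γ, wt S) ≤ 6 * 7 ^ (v.card - 1) := by
        calc (∑ S ∈ D \ Γ, wt S) ≤ ∑ T ∈ D.erase v, wt T := h2
          _ ≤ (D.erase v).card * 7 ^ (v.card - 1) := h4
          _ ≤ 6 * 7 ^ (v.card - 1) := Nat.mul_le_mul_right _ h5
      omega
    obtain ⟨Γ', hΓ'1, hΓ'2⟩ := ih (∑ S ∈ symmDiff Γ D, wt S)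
      (lt_of_lt_of_le hΦ hn) (symmDiff Γ D) le_rfl
    exact ⟨Γ', hreach.trans hΓ'1, hΓ'2⟩

theorem stmt_7 (p : ℕ) (Γ : Finset (Finset (Fin p)))
    (hne : ∀ S ∈ Γ, S ≠ ∅) (hbig : ∃ S ∈ Γ, 3 ≤ S.card) :
    ∃ Γ' : Finset (Finset (Fin p)),
      Relation.ReflTransGen Step Γ Γ' ∧ ∀ S ∈ Γ', S.card ≤ 2 :=
  key (∑ S ∈ Γ, wt S) Γ le_rfl
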